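/- Let ρ be a d×d density matrix and let U₁,…,U_N (N ≥ 2) be d×d unitary matrices. Then ∑_{s=1}^{N} I_ρ(U_s) ≥ (1/(2N−2)) { ∑_{1≤s<t≤N} I_ρ(U_s + U_t) + (2/(N(N−1))) [ ∑_{1≤s<t≤N} √( I_ρ(U_s − U_t) ) ]² }. -/

import Mathlib

open Matrix Finset
open scoped ComplexOrder

/-- The positive semidefinite square root, as defined in the older Mathlib
(removed since; reinstated verbatim with its old definition). -/
noncomputable def Matrix.PosSemidef.sqrt {n : Type*} [Fintype n] [DecidableEq n]
    {A : Matrix n n ℂ} (hA : A.PosSemidef) : Matrix n n ℂ :=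
  hA.1.eigenvectorUnitary.1 * diagonal ((↑) ∘ (√·) ∘ hA.1.eigenvalues) *
  (star hA.1.eigenvectorUnitary : Matrix n n ℂ)

/-- Wigner–Yanase skew information `I_ρ(A) = (1/2) Tr([√ρ, A]† [√ρ, A])` of a matrix `A`
with respect to a positive semidefinite matrix `ρ`, where `√ρ = hρ.sqrt` is the positive
semidefinite square root of `ρ`. -/
noncomputable def skewInfo {d : ℕ} {ρ : Matrix (Fin d) (Fin d) ℂ} (hρ : ρ.PosSemidef)
    (A : Matrix (Fin d) (Fin d) ℂ) : ℝ :=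
  (1 / 2 : ℝ) *
    (((hρ.sqrt * A - A * hρ.sqrt)ᴴ * (hρ.sqrt * A - A * hρ.sqrt)).trace).re

section Aux
variable {d : ℕ} {ρ : Matrix (Fin d) (Fin d) ℂ} (hρ : ρ.PosSemidef)

lemma trace_re_nonneg' (A : Matrix (Fin d) (Fin d) ℂ) :
    0 ≤ ((Aᴴ * A).trace).re := by
  simp only [Matrix.trace, Matrix.diag_apply, Matrix.mul_apply, Matrix.conjTranspose_apply,
    Complex.re_sum, Complex.star_def, Complex.mul_re, Complex.conj_re, Complex.conj_im]
  refine Finset.sum_nonneg fun j _ => Finset.sum_nonneg fun i _ => ?_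
  nlinarith [sq_nonneg (A i j).re, sq_nonneg (A i j).im]

lemma skewInfo_nonneg (A : Matrix (Fin d) (Fin d) ℂ) : 0 ≤ skewInfo hρ A := by
  unfold skewInfo
  have := trace_re_nonneg' (hρ.sqrt * A - A * hρ.sqrt)
  linarith

lemma skewInfo_parallelogram (A B : Matrix (Fin d) (Fin d) ℂ) :
    skewInfo hρ (A + B) + skewInfo hρ (A - B)
      = 2 * skewInfo hρ A + 2 * skewInfo hρ B := by
  unfold skewInfo
  set X := hρ.sqrt * A - A * hρ.sqrt with hX
  set Y := hρ.sqrt * B - B * hρ.sqrt with hY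
  have h1 : hρ.sqrt * (A + B) - (A + B) * hρ.sqrt = X + Y := by
    rw [hX, hY]; noncomm_ring
  have h2 : hρ.sqrt * (A - B) - (A - B) * hρ.sqrt = X - Y := by
    rw [hX, hY]; noncomm_ring
  have key : ((X + Y)ᴴ * (X + Y)).trace + ((X - Y)ᴴ * (X - Y)).trace
      = 2 * (Xᴴ * X).trace + 2 * (Yᴴ * Y).trace := by
    simp only [Matrix.conjTranspose_add, Matrix.conjTranspose_sub, Matrix.add_mul,
      Matrix.mul_add, Matrix.sub_mul, Matrix.mul_sub, Matrix.trace_add, Matrix.trace_sub]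
    ring
  have keyre := congrArg Complex.re key
  simp only [Complex.add_re, Complex.mul_re, Complex.re_ofNat, Complex.im_ofNat,
    zero_mul, sub_zero] at keyre
  rw [h1, h2]
  linarith

lemma pairsum {N : ℕ} (hN : 1 ≤ N) (f : Fin N → ℝ) :
    ∑ s : Fin N, ∑ t ∈ Finset.Ioi s, (f s + f t) = ((N : ℝ) - 1) * ∑ s, f s := by
  have h := Finset.sum_sum_Ioi_add_eq_sum_sum_off_diag (fun _ j : Fin N => f j)
  simp only [Finset.sum_const, Finset.card_compl, Fintype.card_fin, Finset.card_singleton,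
    nsmul_eq_mul] at h
  rw [h, ← Finset.mul_sum]
  push_cast [Nat.cast_sub hN]
  ring

end Aux

theorem stmt_8 {d N : ℕ} (hN : 2 ≤ N)
    (ρ : Matrix (Fin d) (Fin d) ℂ) (hρ : ρ.PosSemidef) (htr : ρ.trace = 1)
    (U : Fin N → Matrix (Fin d) (Fin d) ℂ)
    (hU : ∀ s, U s ∈ Matrix.unitaryGroup (Fin d) ℂ) :
    ∑ s, skewInfo hρ (U s) ≥
      (1 / (2 * (N : ℝ) - 2)) *
        ((∑ s : Fin N, ∑ t ∈ Finset.Ioi s, skewInfo hρ (U s + U t))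
          + (2 / ((N : ℝ) * ((N : ℝ) - 1))) *
            (∑ s : Fin N, ∑ t ∈ Finset.Ioi s,
              Real.sqrt (skewInfo hρ (U s - U t))) ^ 2) := by
  have hN1 : (1 : ℕ) ≤ N := le_trans (by norm_num) hN
  have hNR : (2 : ℝ) ≤ (N : ℝ) := by exact_mod_cast hN
  set S := ∑ s, skewInfo hρ (U s) with hS
  set P := ∑ s : Fin N, ∑ t ∈ Finset.Ioi s, skewInfo hρ (U s + U t) with hP
  set M := ∑ s : Fin N, ∑ t ∈ Finset.Ioi s, skewInfo hρ (U s - U t) with hM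
  set Q := ∑ s : Fin N, ∑ t ∈ Finset.Ioi s, Real.sqrt (skewInfo hρ (U s - U t)) with hQ
  -- parallelogram: P + M = 2 (N-1) S
  have hPM : P + M = 2 * ((N : ℝ) - 1) * S := by
    have : P + M = ∑ s : Fin N, ∑ t ∈ Finset.Ioi s,
        (2 * skewInfo hρ (U s) + 2 * skewInfo hρ (U t)) := by
      rw [hP, hM, ← Finset.sum_add_distrib]
      refine Finset.sum_congr rfl fun s _ => ?_
      rw [← Finset.sum_add_distrib]
      exact Finset.sum_congr rfl fun t _ => skewInfo_parallelogram hρ (U s) (U t)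
    rw [this]
    have h2 : ∀ s t : Fin N, 2 * skewInfo hρ (U s) + 2 * skewInfo hρ (U t)
        = (fun x => 2 * skewInfo hρ (U x)) s + (fun x => 2 * skewInfo hρ (U x)) t := by
      intro s t; rfl
    calc ∑ s : Fin N, ∑ t ∈ Finset.Ioi s,
          (2 * skewInfo hρ (U s) + 2 * skewInfo hρ (U t))
        = ((N : ℝ) - 1) * ∑ s, 2 * skewInfo hρ (U s) := pairsum hN1 _
      _ = 2 * ((N : ℝ) - 1) * S := by
          simp only [hS, Finset.mul_sum]
          exact Finset.sum_congr rfl fun x _ => by ring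
  -- Cauchy–Schwarz: Q^2 ≤ (N(N-1)/2) * M
  have hM0 : (0:ℝ) ≤ M :=
    Finset.sum_nonneg fun s _ => Finset.sum_nonneg fun t _ => skewInfo_nonneg hρ _
  have hcard : ((Finset.univ.sigma fun s : Fin N => Finset.Ioi s).card : ℝ) * 2
      = (N : ℝ) * ((N : ℝ) - 1) := by
    have h1 : (Finset.univ.sigma fun s : Fin N => Finset.Ioi s).card
        = ∑ s : Fin N, (Finset.Ioi s).card := Finset.card_sigma _ _
    have h2 : ∑ s : Fin N, (Finset.Ioi s).card = ∑ i ∈ Finset.range N, (N - 1 - i) := by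
      simp only [Fin.card_Ioi]
      exact Fin.sum_univ_eq_sum_range (fun i => N - 1 - i) N
    have h3 : ∑ i ∈ Finset.range N, (N - 1 - i) = ∑ i ∈ Finset.range N, i := by
      have := Finset.sum_range_reflect (fun i => i) N
      simpa using this
    have h4 := Finset.sum_range_id_mul_two N
    have : (Finset.univ.sigma fun s : Fin N => Finset.Ioi s).card * 2 = N * (N - 1) := by
      rw [h1, h2, h3, h4]
    calc ((Finset.univ.sigma fun s : Fin N => Finset.Ioi s).card : ℝ) * 2
        = ((N * (N - 1) : ℕ) : ℝ) := by exact_mod_cast congrArg (Nat.cast : ℕ → ℝ) this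
      _ = (N : ℝ) * ((N : ℝ) - 1) := by push_cast [Nat.cast_sub hN1]; ring
  have hQM : Q ^ 2 ≤ ((N : ℝ) * ((N : ℝ) - 1) / 2) * M := by
    have hQ' : Q = ∑ p ∈ Finset.univ.sigma fun s : Fin N => Finset.Ioi s,
        Real.sqrt (skewInfo hρ (U p.1 - U p.2)) := by
      rw [hQ, Finset.sum_sigma]
    have hM' : M = ∑ p ∈ Finset.univ.sigma fun s : Fin N => Finset.Ioi s,
        skewInfo hρ (U p.1 - U p.2) := by
      rw [hM, Finset.sum_sigma]
    have hcs := sq_sum_le_card_mul_sum_sq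
      (s := Finset.univ.sigma fun s : Fin N => Finset.Ioi s)
      (f := fun p => Real.sqrt (skewInfo hρ (U p.1 - U p.2)))
    have hsq : ∑ p ∈ Finset.univ.sigma fun s : Fin N => Finset.Ioi s,
        (Real.sqrt (skewInfo hρ (U p.1 - U p.2))) ^ 2
        = ∑ p ∈ Finset.univ.sigma fun s : Fin N => Finset.Ioi s,
          skewInfo hρ (U p.1 - U p.2) :=
      Finset.sum_congr rfl fun p _ => Real.sq_sqrt (skewInfo_nonneg hρ _)
    rw [hsq, ← hM'] at hcs
    rw [hQ']
    calc (∑ p ∈ Finset.univ.sigma fun s : Fin N => Finset.Ioi s,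
          Real.sqrt (skewInfo hρ (U p.1 - U p.2))) ^ 2
        ≤ ((Finset.univ.sigma fun s : Fin N => Finset.Ioi s).card : ℝ) * M := hcs
      _ = ((N : ℝ) * ((N : ℝ) - 1) / 2) * M := by
          have hc2 : ((Finset.univ.sigma fun s : Fin N => Finset.Ioi s).card : ℝ)
              = (N : ℝ) * ((N : ℝ) - 1) / 2 := by linarith [hcard]
          rw [hc2]
  -- final algebra
  have hNN : (0:ℝ) < (N : ℝ) * ((N : ℝ) - 1) := by nlinarith
  have hden : (0:ℝ) < 2 * (N : ℝ) - 2 := by linarith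
  have hkey : (2 / ((N : ℝ) * ((N : ℝ) - 1))) * Q ^ 2 ≤ M := by
    rw [div_mul_eq_mul_div, div_le_iff₀ hNN]
    nlinarith [hQM]
  have : P + (2 / ((N : ℝ) * ((N : ℝ) - 1))) * Q ^ 2 ≤ 2 * ((N : ℝ) - 1) * S := by
    linarith [hPM, hkey]
  rw [ge_iff_le, one_div, inv_mul_le_iff₀ hden]
  calc P + 2 / ((N:ℝ) * ((N:ℝ) - 1)) * Q ^ 2 ≤ 2 * ((N : ℝ) - 1) * S := this
    _ = (2 * (N:ℝ) - 2) * S := by ring
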